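/- Let (Y_n) and (Z_n) be real random variables on a common probability space, let K_n(ω,·) and L_n(ω,·) be regular conditional distribution functions of Y_n + Z_n and Z_n given a σ-field 𝒢 (with Y_n 𝒢-measurable), and let d be the Lévy metric. Suppose there exist distribution functions K and L with L nondegenerate such that d(K_n, K) → 0 in probability and d(L_n, L) → 0 in probability. Then there exists a random variable Y such that Y_n → Y in probability. -/

import Mathlib

open MeasureTheory Filter Topology ProbabilityTheory
open Set Metric
open scoped ENNReal

lemma thick_preimage (r c : ℝ) (B : Set ℝ) :
    (fun x => x + c) ⁻¹' (Metric.thickening r B) = Metric.thickening r ((fun x => x + c) ⁻¹' B) := by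
  ext x
  simp only [Set.mem_preimage, Metric.mem_thickening_iff]
  constructor
  · rintro ⟨z, hz, hd⟩
    refine ⟨z - c, by simpa using hz, ?_⟩
    rw [Real.dist_eq] at hd ⊢
    convert hd using 2
    ring
  · rintro ⟨z, hz, hd⟩
    refine ⟨z + c, hz, ?_⟩
    rw [Real.dist_eq] at hd ⊢
    convert hd using 2
    ring

lemma lpe_shift_le (μ ν : Measure ℝ) (c : ℝ) :
    levyProkhorovEDist (μ.map (· + c)) (ν.map (· + c)) ≤ levyProkhorovEDist μ ν := by
  apply levyProkhorovEDist_le_of_forall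
  intro ε B hε hεtop hB
  have hc : Measurable (fun x : ℝ => x + c) := measurable_add_const c
  have hthick : MeasurableSet (Metric.thickening ε.toReal B) :=
    Metric.isOpen_thickening.measurableSet
  rw [Measure.map_apply hc hB, Measure.map_apply hc hB,
    Measure.map_apply hc hthick, Measure.map_apply hc hthick, thick_preimage]
  exact ⟨(left_measure_le_of_levyProkhorovEDist_lt hε (hc hB)).trans (by rfl),
    (right_measure_le_of_levyProkhorovEDist_lt hε (hc hB)).trans (by rfl)⟩

lemma lpe_shift (μ ν : Measure ℝ) (c : ℝ) :
    levyProkhorovEDist (μ.map (· + c)) (ν.map (· + c)) = levyProkhorovEDist μ ν := by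
  refine le_antisymm (lpe_shift_le μ ν c) ?_
  have h := lpe_shift_le (μ.map (· + c)) (ν.map (· + c)) (-c)
  rwa [Measure.map_map (measurable_add_const _) (measurable_add_const _),
    Measure.map_map (measurable_add_const _) (measurable_add_const _),
    (by ext x; simp : (fun x : ℝ => x + -c) ∘ (fun x : ℝ => x + c) = id),
    Measure.map_id, Measure.map_id] at h

lemma lpd_shift (μ ν : Measure ℝ) (c : ℝ) :
    levyProkhorovDist (μ.map (· + c)) (ν.map (· + c)) = levyProkhorovDist μ ν := by
  simp only [levyProkhorovDist, lpe_shift]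

lemma thick_Iic {r x : ℝ} : Metric.thickening r (Iic x) ⊆ Iic (x + r) := by
  intro y hy
  rw [Metric.mem_thickening_iff] at hy
  obtain ⟨z, hz, hd⟩ := hy
  rw [Real.dist_eq] at hd
  have : y - z ≤ |y - z| := le_abs_self _
  simp only [mem_Iic] at hz ⊢
  linarith

lemma exists_cdf_mid (L : Measure ℝ) [IsProbabilityMeasure L] (h : ∀ c, L ≠ Measure.dirac c) :
    ∃ x : ℝ, 0 < L (Iic x) ∧ L (Iic x) < 1 := by
  by_contra hcon
  push_neg at hcon
  have dich : ∀ x : ℝ, L (Iic x) = 0 ∨ L (Iic x) = 1 := by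
    intro x
    rcases eq_or_lt_of_le (zero_le : 0 ≤ L (Iic x)) with h0 | h0
    · exact Or.inl h0.symm
    · exact Or.inr (le_antisymm prob_le_one (hcon x h0))
  -- the set where the cdf is 1
  set s : Set ℝ := {x | L (Iic x) = 1} with hs
  have hne : s.Nonempty := by
    have ht := tendsto_measure_Iic_atTop (μ := L)
    rw [measure_univ] at ht
    have := ht.eventually_ne one_ne_zero
    obtain ⟨x, hx⟩ := this.exists
    exact ⟨x, (dich x).resolve_left hx⟩
  have hzero : ∃ y : ℝ, L (Iic y) = 0 := by
    by_contra hz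
    push_neg at hz
    have hone : ∀ y : ℝ, L (Iic y) = 1 := fun y => (dich y).resolve_left (hz y)
    have hinter : ⋂ n : ℕ, Iic (-(n : ℝ)) = (∅ : Set ℝ) := by
      ext y
      simp only [mem_iInter, mem_Iic, mem_empty_iff_false, iff_false, not_forall]
      obtain ⟨n, hn⟩ := exists_nat_gt (-y)
      exact ⟨n, by push_neg; linarith⟩
    have ht := tendsto_measure_iInter_atTop (μ := L)
      (s := fun n : ℕ => Iic (-(n : ℝ)))
      (fun n => measurableSet_Iic.nullMeasurableSet)
      (fun n m hnm => Iic_subset_Iic.mpr (neg_le_neg (Nat.cast_le.mpr hnm)))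
      ⟨0, measure_ne_top _ _⟩
    rw [hinter, measure_empty] at ht
    have ht2 : Tendsto (L ∘ fun n : ℕ => Iic (-(n : ℝ))) atTop (𝓝 1) := by
      simp only [Function.comp_def, hone]
      exact tendsto_const_nhds
    exact one_ne_zero (tendsto_nhds_unique ht2 ht)
  obtain ⟨y₀, hy₀⟩ := hzero
  have hbdd : BddBelow s := by
    refine ⟨y₀, fun x hx => ?_⟩
    by_contra hlt
    push_neg at hlt
    have := measure_mono (Iic_subset_Iic.mpr hlt.le) (μ := L)
    rw [hx, hy₀] at this
    simp at this
  set c := sInf s with hc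
  have h1 : ∀ x : ℝ, c < x → L (Iic x) = 1 := by
    intro x hx
    obtain ⟨z, hz, hzx⟩ := (csInf_lt_iff hbdd hne).mp hx
    refine le_antisymm prob_le_one ?_
    calc (1 : ℝ≥0∞) = L (Iic z) := hz.symm
      _ ≤ L (Iic x) := measure_mono (Iic_subset_Iic.mpr hzx.le)
  have h2 : ∀ x : ℝ, x < c → L (Iic x) = 0 := by
    intro x hx
    refine (dich x).resolve_right fun hx1 => ?_
    exact absurd (csInf_le hbdd hx1) (not_le.mpr hx)
  have hIoi : L (Ioi c) = 0 := by
    have hsub : Ioi c ⊆ ⋃ n : ℕ, (Iic (c + 1/(n+1)))ᶜ := by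
      intro y hy
      simp only [mem_Ioi] at hy
      obtain ⟨n, hn⟩ := exists_nat_one_div_lt (sub_pos.mpr hy)
      refine mem_iUnion.mpr ⟨n, ?_⟩
      simp only [mem_compl_iff, mem_Iic, not_le]
      push_cast at hn ⊢
      linarith
    refine measure_mono_null hsub (measure_iUnion_null fun n => ?_)
    rw [measure_compl measurableSet_Iic (measure_ne_top _ _), measure_univ,
      h1 _ (lt_add_of_pos_right _ (by positivity)), tsub_self]
  have hIio : L (Iio c) = 0 := by
    have hsub : Iio c ⊆ ⋃ n : ℕ, Iic (c - 1/(n+1)) := by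
      intro y hy
      simp only [mem_Iio] at hy
      obtain ⟨n, hn⟩ := exists_nat_one_div_lt (sub_pos.mpr hy)
      refine mem_iUnion.mpr ⟨n, ?_⟩
      simp only [mem_Iic]
      push_cast at hn ⊢
      linarith
    refine measure_mono_null hsub (measure_iUnion_null fun n => ?_)
    exact h2 _ (by nlinarith [one_div_pos.mpr (by positivity : (0:ℝ) < (n:ℝ)+1)])
  have hcompl : L ({c}ᶜ) = 0 := by
    rw [← Iio_union_Ioi]
    exact measure_union_null hIio hIoi
  have hLdirac : L = Measure.dirac c := by
    have hsing : L {c} = 1 := by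
      rwa [prob_compl_eq_zero_iff (measurableSet_singleton c)] at hcompl
    refine Measure.ext fun B hB => ?_
    have hsplit : L B = L (B ∩ {c}) + L (B \ {c}) :=
      (measure_inter_add_diff B (measurableSet_singleton c)).symm
    have hdiff : L (B \ {c}) = 0 :=
      measure_mono_null (diff_subset_compl B {c}) hcompl
    rw [Measure.dirac_apply' c hB]
    by_cases hcB : c ∈ B
    · have : B ∩ {c} = {c} := by
        ext z; simp only [mem_inter_iff, mem_singleton_iff]
        constructor
        · exact fun h => h.2
        · rintro rfl; exact ⟨hcB, rfl⟩
      rw [hsplit, this, hsing, hdiff, indicator_of_mem hcB]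
      simp
    · have : B ∩ {c} = ∅ := by
        ext z; simp only [mem_inter_iff, mem_singleton_iff, mem_empty_iff_false, iff_false,
          not_and]
        rintro hz rfl; exact hcB hz
      rw [hsplit, this, measure_empty, hdiff, indicator_of_notMem hcB]
      simp
  exact h c hLdirac

lemma quant (L : Measure ℝ) [IsProbabilityMeasure L] (hnd : ∀ c, L ≠ Measure.dirac c)
    {η : ℝ} (hη : 0 < η) :
    ∃ δ : ℝ, 0 < δ ∧ ∀ a : ℝ, levyProkhorovDist (L.map (· + a)) L ≤ δ → |a| < η := by
  obtain ⟨x₀, h0, h1⟩ := exists_cdf_mid L hnd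
  set θ := L (Iic x₀) with hθ
  have hθtop : θ ≠ ⊤ := (lt_of_lt_of_le h1 le_top).ne
  -- find k with L (Iic (x₀ - k * (η/2))) < θ/2
  have hhalf : (0 : ℝ≥0∞) < θ/2 := ENNReal.div_pos h0.ne' (by norm_num)
  obtain ⟨k, hk⟩ : ∃ k : ℕ, L (Iic (x₀ - k * (η/2))) < θ/2 := by
    have hinter : ⋂ n : ℕ, Iic (x₀ - n * (η/2)) = (∅ : Set ℝ) := by
      ext y
      simp only [mem_iInter, mem_Iic, mem_empty_iff_false, iff_false, not_forall]
      obtain ⟨n, hn⟩ := exists_nat_gt ((x₀ - y)/(η/2))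
      refine ⟨n, ?_⟩
      rw [div_lt_iff₀ (by positivity)] at hn
      push_neg
      nlinarith
    have ht := tendsto_measure_iInter_atTop (μ := L)
      (s := fun n : ℕ => Iic (x₀ - n * (η/2)))
      (fun n => measurableSet_Iic.nullMeasurableSet)
      (fun n m hnm => Iic_subset_Iic.mpr (by
        have : (n:ℝ) ≤ m := Nat.cast_le.mpr hnm
        nlinarith))
      ⟨0, measure_ne_top _ _⟩
    rw [hinter, measure_empty] at ht
    exact (ht.eventually_lt_const hhalf).exists
  -- choose δ
  have hθr : 0 < θ.toReal := ENNReal.toReal_pos h0.ne' hθtop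
  set δ := min (η/4) (θ.toReal / (8 * (k+1))) with hδdef
  have hδpos : 0 < δ := lt_min (by positivity) (by positivity)
  refine ⟨δ, hδpos, ?_⟩
  intro a hd
  by_contra hcon
  push_neg at hcon
  set c : ℝ≥0∞ := ENNReal.ofReal (2*δ) with hcdef
  have hctr : c.toReal = 2*δ := ENNReal.toReal_ofReal (by positivity)
  have hlt : levyProkhorovEDist (L.map (· + a)) L < c := by
    rw [hcdef, ← ENNReal.ofReal_toReal (levyProkhorovEDist_ne_top (L.map (· + a)) L)]
    exact ENNReal.ofReal_lt_ofReal_iff_of_nonneg ENNReal.toReal_nonneg |>.mpr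
      (lt_of_le_of_lt hd (by linarith))
  have hmapIic : ∀ x : ℝ, (L.map (· + a)) (Iic x) = L (Iic (x - a)) := by
    intro x
    rw [Measure.map_apply (measurable_add_const a) measurableSet_Iic]
    congr 1
    ext z
    simp only [mem_preimage, mem_Iic]
    constructor <;> intro <;> linarith
  have hδη : 2*δ ≤ η/2 := by
    have := min_le_left (η/4) (θ.toReal / (8 * (k+1)))
    rw [← hδdef] at this
    linarith
  -- key one-step inequality
  have key : ∀ x : ℝ, L (Iic x) ≤ L (Iic (x - η/2)) + c := by
    intro x
    rcases abs_cases a with ⟨habs, hsgn⟩ | ⟨habs, hsgn⟩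
    · -- a ≥ η
      have ha : η ≤ a := by rw [habs] at hcon; exact hcon
      have step := right_measure_le_of_levyProkhorovEDist_lt hlt
        (B := Iic x) measurableSet_Iic
      have hsub : (L.map (· + a)) (thickening c.toReal (Iic x)) ≤
          L (Iic (x - η/2)) := by
        calc (L.map (· + a)) (thickening c.toReal (Iic x))
            ≤ (L.map (· + a)) (Iic (x + 2*δ)) := by
              rw [hctr]; exact measure_mono thick_Iic
          _ = L (Iic (x + 2*δ - a)) := hmapIic _
          _ ≤ L (Iic (x - η/2)) := measure_mono (Iic_subset_Iic.mpr (by linarith))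
      exact step.trans (add_le_add_left hsub c)
    · -- a ≤ -η
      have ha : a ≤ -η := by rw [habs] at hcon; linarith
      have step := left_measure_le_of_levyProkhorovEDist_lt hlt
        (B := Iic (x - η)) measurableSet_Iic
      rw [hmapIic] at step
      have hfirst : L (Iic x) ≤ L (Iic (x - η - a)) :=
        measure_mono (Iic_subset_Iic.mpr (by linarith))
      have hsub : L (thickening c.toReal (Iic (x - η))) ≤ L (Iic (x - η/2)) := by
        calc L (thickening c.toReal (Iic (x - η)))
            ≤ L (Iic (x - η + 2*δ)) := by rw [hctr]; exact measure_mono thick_Iic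
          _ ≤ L (Iic (x - η/2)) := measure_mono (Iic_subset_Iic.mpr (by linarith))
      exact hfirst.trans (step.trans (add_le_add_left hsub c))
  -- iterate
  have iter : ∀ m : ℕ, θ ≤ L (Iic (x₀ - m * (η/2))) + m * c := by
    intro m
    induction m with
    | zero => simp [hθ]
    | succ m ih =>
      have hx : x₀ - m * (η/2) - η/2 = x₀ - (m+1) * (η/2) := by ring
      refine le_trans (ih.trans (add_le_add_left (key _) _)) (le_of_eq ?_)
      rw [hx]
      push_cast
      ring
  -- contradiction
  have hkc : (k : ℝ≥0∞) * c ≤ θ/2 := by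
    have hδ2 : δ ≤ θ.toReal / (8 * (k+1)) := min_le_right _ _
    calc (k : ℝ≥0∞) * c = ENNReal.ofReal (k * (2*δ)) := by
          rw [hcdef, ← ENNReal.ofReal_natCast k, ← ENNReal.ofReal_mul (by positivity)]
      _ ≤ ENNReal.ofReal (θ.toReal / 2) := by
          apply ENNReal.ofReal_le_ofReal
          have h8 : δ * (8*((k:ℝ)+1)) ≤ θ.toReal := (le_div_iff₀ (by positivity)).mp hδ2
          nlinarith [hδpos.le, Nat.cast_nonneg (α := ℝ) k]
      _ ≤ θ/2 := by
          rw [ENNReal.ofReal_div_of_pos (by norm_num), ENNReal.ofReal_toReal hθtop]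
          simp [ENNReal.ofReal_ofNat]
  have hfinal := iter k
  have : θ < θ := by
    calc θ ≤ L (Iic (x₀ - k * (η/2))) + k * c := hfinal
      _ < θ/2 + θ/2 := ENNReal.add_lt_add_of_lt_of_le
            ((hkc.trans_lt (ENNReal.div_lt_top hθtop two_ne_zero)).ne) hk hkc
      _ = θ := ENNReal.add_halves θ
  exact lt_irrefl _ this

lemma shift_close (K L : Measure ℝ) [IsProbabilityMeasure K] [IsProbabilityMeasure L]
    (ν ν' : Measure ℝ) [IsProbabilityMeasure ν] [IsProbabilityMeasure ν'] (a b δ : ℝ)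
    (h1 : levyProkhorovDist (ν.map (· + a)) K ≤ δ)
    (h2 : levyProkhorovDist ν L ≤ δ)
    (h3 : levyProkhorovDist (ν'.map (· + b)) K ≤ δ)
    (h4 : levyProkhorovDist ν' L ≤ δ) :
    levyProkhorovDist (L.map (· + (a - b))) L ≤ 4*δ := by
  haveI : IsProbabilityMeasure (ν.map (· + a)) :=
    Measure.isProbabilityMeasure_map (measurable_add_const a).aemeasurable
  haveI : IsProbabilityMeasure (ν'.map (· + b)) :=
    Measure.isProbabilityMeasure_map (measurable_add_const b).aemeasurable
  haveI : IsProbabilityMeasure (L.map (· + a)) :=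
    Measure.isProbabilityMeasure_map (measurable_add_const a).aemeasurable
  haveI : IsProbabilityMeasure (L.map (· + b)) :=
    Measure.isProbabilityMeasure_map (measurable_add_const b).aemeasurable
  have e1 : levyProkhorovDist (L.map (· + a)) K ≤ 2*δ := by
    have t1 := levyProkhorovDist_triangle (L.map (· + a)) (ν.map (· + a)) K
    have t2 : levyProkhorovDist (L.map (· + a)) (ν.map (· + a)) ≤ δ := by
      rw [lpd_shift]
      rwa [levyProkhorovDist_comm]
    linarith
  have e2 : levyProkhorovDist (L.map (· + b)) K ≤ 2*δ := by
    have t1 := levyProkhorovDist_triangle (L.map (· + b)) (ν'.map (· + b)) K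
    have t2 : levyProkhorovDist (L.map (· + b)) (ν'.map (· + b)) ≤ δ := by
      rw [lpd_shift]
      rwa [levyProkhorovDist_comm]
    linarith
  have e3 : levyProkhorovDist (L.map (· + a)) (L.map (· + b)) ≤ 4*δ := by
    have t1 := levyProkhorovDist_triangle (L.map (· + a)) K (L.map (· + b))
    rw [levyProkhorovDist_comm K (L.map (· + b))] at t1
    linarith
  have key := lpd_shift (L.map (· + a)) (L.map (· + b)) (-b)
  rw [Measure.map_map (measurable_add_const _) (measurable_add_const _),
    Measure.map_map (measurable_add_const _) (measurable_add_const _)] at key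
  have ha : ((· + (-b)) ∘ (· + a) : ℝ → ℝ) = (· + (a - b)) := by ext x; simp; ring
  have hb : ((· + (-b)) ∘ (· + b) : ℝ → ℝ) = id := by ext x; simp
  rw [ha, hb, Measure.map_id] at key
  rw [key]
  exact e3

lemma kernel_shift {Ω : Type*} [mΩ : MeasurableSpace Ω] (κ : Measure Ω)
    [IsProbabilityMeasure κ] (f g : Ω → ℝ) (hf : Measurable f) (hg : Measurable g) (c : ℝ)
    (hq : ∀ q : ℚ, κ (f ⁻¹' Iic (q:ℝ)) = (if c ≤ (q:ℝ) then 1 else 0)) :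
    Measure.map (fun x => f x + g x) κ = Measure.map (· + c) (Measure.map g κ) := by
  have hnull : κ {x | f x ≠ c} = 0 := by
    have hU : ∀ q : ℚ, κ {x | f x ≤ (q:ℝ) ∧ (q:ℝ) < c} = 0 := by
      intro q
      by_cases hq' : (q:ℝ) < c
      · refine measure_mono_null (t := f ⁻¹' Iic (q:ℝ)) (fun x hx => hx.1) ?_
        rw [hq q, if_neg (not_le.mpr hq')]
      · exact measure_mono_null (t := ∅) (fun x hx => absurd hx.2 hq') measure_empty
    have hV : ∀ q : ℚ, κ {x | (q:ℝ) < f x ∧ c ≤ (q:ℝ)} = 0 := by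
      intro q
      by_cases hq' : c ≤ (q:ℝ)
      · refine measure_mono_null (t := (f ⁻¹' Iic (q:ℝ))ᶜ) (fun x hx => ?_) ?_
        · exact (mem_compl_iff (f ⁻¹' Iic (q:ℝ)) x).mpr
            (by simp only [mem_preimage, mem_Iic, not_le]; exact hx.1)
        · rw [measure_compl (hf measurableSet_Iic) (measure_ne_top _ _),
            measure_univ, hq q, if_pos hq', tsub_self]
      · exact measure_mono_null (t := ∅) (fun x hx => absurd hx.2 hq') measure_empty
    refine measure_mono_null (fun x hx => ?_)
      (measure_union_null (measure_iUnion_null hU) (measure_iUnion_null hV))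
    rcases lt_or_gt_of_ne hx with h | h
    · obtain ⟨q, hq1, hq2⟩ := exists_rat_btwn h
      exact Or.inl (mem_iUnion.mpr ⟨q, hq1.le, hq2⟩)
    · obtain ⟨q, hq1, hq2⟩ := exists_rat_btwn h
      exact Or.inr (mem_iUnion.mpr ⟨q, hq2, hq1.le⟩)
  have hae : (fun x => f x + g x) =ᵐ[κ] (fun x => g x + c) := by
    have hfc : ∀ᵐ x ∂κ, f x = c := by
      rw [ae_iff]
      exact hnull
    filter_upwards [hfc] with x hx
    rw [hx, add_comm]
  rw [Measure.map_congr hae, Measure.map_map (measurable_add_const c) hg]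
  rfl

theorem stmt_18 {Ω : Type*} {mΩ : MeasurableSpace Ω} [StandardBorelSpace Ω] [Nonempty Ω]
    (P : Measure Ω) [IsProbabilityMeasure P]
    (𝒢 : MeasurableSpace Ω) (h𝒢 : 𝒢 ≤ mΩ)
    (Y Z : ℕ → Ω → ℝ)
    (hYmeas : ∀ n, Measurable[𝒢] (Y n)) (hZmeas : ∀ n, Measurable[mΩ] (Z n))
    (K L : Measure ℝ) [IsProbabilityMeasure K] [IsProbabilityMeasure L]
    -- L is nondegenerate
    (hLnondeg : ∀ c : ℝ, L ≠ Measure.dirac c)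
    -- the conditional law of Yₙ + Zₙ given 𝒢 converges to K in probability
    -- (in the Lévy–Prokhorov metric)
    (hK : ∀ ε > (0 : ℝ), Tendsto
      (fun n => P {ω | ε < levyProkhorovDist
        (@Measure.map Ω ℝ mΩ Real.measurableSpace (fun ω' => Y n ω' + Z n ω')
          (condExpKernel (mΩ := mΩ) P 𝒢 ω)) K})
      atTop (𝓝 0))
    -- the conditional law of Zₙ given 𝒢 converges to L in probability
    (hL : ∀ ε > (0 : ℝ), Tendsto
      (fun n => P {ω | ε < levyProkhorovDist
        (@Measure.map Ω ℝ mΩ Real.measurableSpace (Z n) (condExpKernel (mΩ := mΩ) P 𝒢 ω)) L})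
      atTop (𝓝 0)) :
    ∃ Ylim : Ω → ℝ, TendstoInMeasure P Y atTop Ylim := by
  classical
  haveI : SigmaFinite (P.trim h𝒢) := inferInstance
  -- a.e. identity: conditional law of Yₙ + Zₙ is the shift of the conditional law of Zₙ
  have hAE : ∀ᵐ ω ∂P, ∀ n,
      @Measure.map Ω ℝ mΩ Real.measurableSpace (fun ω' => Y n ω' + Z n ω')
        (condExpKernel (mΩ := mΩ) P 𝒢 ω)
      = Measure.map (· + Y n ω)
        (@Measure.map Ω ℝ mΩ Real.measurableSpace (Z n) (condExpKernel (mΩ := mΩ) P 𝒢 ω)) := by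
    rw [ae_all_iff]
    intro n
    have hindq : ∀ q : ℚ, ∀ᵐ ω ∂P,
        (condExpKernel (mΩ := mΩ) P 𝒢 ω) (Y n ⁻¹' Iic (q:ℝ))
          = (if Y n ω ≤ (q:ℝ) then 1 else 0) := by
      intro q
      have hs𝒢 : MeasurableSet[𝒢] (Y n ⁻¹' Iic (q:ℝ)) := (hYmeas n) measurableSet_Iic
      have hs : MeasurableSet[mΩ] (Y n ⁻¹' Iic (q:ℝ)) := h𝒢 _ hs𝒢
      have h1 := condExpKernel_ae_eq_condExp (mΩ := mΩ) (μ := P) h𝒢 hs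
      have h2 : (P⟦(Y n ⁻¹' Iic (q:ℝ)) | 𝒢⟧)
          = (Y n ⁻¹' Iic (q:ℝ)).indicator (fun _ => (1:ℝ)) :=
        condExp_of_stronglyMeasurable h𝒢
          ((@stronglyMeasurable_const Ω ℝ 𝒢 _ _).indicator hs𝒢)
          ((@integrable_const Ω ℝ mΩ P _ _ (1:ℝ)).indicator hs)
      rw [h2] at h1
      filter_upwards [h1] with ω hω
      by_cases hmem : ω ∈ Y n ⁻¹' Iic (q:ℝ)
      · rw [indicator_of_mem hmem] at hω
        rw [if_pos (by simpa only [mem_preimage, mem_Iic] using hmem)]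
        exact (ENNReal.toReal_eq_one_iff _).mp hω
      · rw [indicator_of_notMem hmem] at hω
        rw [if_neg (by simpa only [mem_preimage, mem_Iic] using hmem)]
        rcases (ENNReal.toReal_eq_zero_iff _).mp hω with h | h
        · exact h
        · exact absurd h (measure_ne_top _ _)
    filter_upwards [ae_all_iff.mpr hindq] with ω hω
    exact kernel_shift (mΩ := mΩ) (condExpKernel (mΩ := mΩ) P 𝒢 ω) (Y n) (Z n)
      ((hYmeas n).mono h𝒢 le_rfl) (hZmeas n) (Y n ω) hω
  -- quantitative convergence-of-types thresholds
  choose δ₀ hδ₀pos hδ₀ using fun k : ℕ =>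
    quant L hLnondeg (η := 1/((k:ℝ)+1)) (by positivity)
  set D : ℕ → ℝ := fun k => Nat.rec (δ₀ 0 / 4) (fun k ih => min ih (δ₀ (k+1) / 4)) k with hD
  have hDpos : ∀ k, 0 < D k := by
    intro k
    induction k with
    | zero => exact div_pos (hδ₀pos 0) (by norm_num)
    | succ k ih => exact lt_min ih (div_pos (hδ₀pos (k+1)) (by norm_num))
  have hDsucc : ∀ k, D (k+1) = min (D k) (δ₀ (k+1) / 4) := fun k => rfl
  have hDanti : ∀ k l, k ≤ l → D l ≤ D k := by
    intro k l hkl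
    induction l with
    | zero =>
      have : k = 0 := Nat.le_zero.mp hkl
      subst this; exact le_rfl
    | succ l ih =>
      rcases Nat.lt_or_ge k (l+1) with h | h
      · exact le_trans (by rw [hDsucc]; exact min_le_left _ _) (ih (Nat.lt_succ_iff.mp h))
      · have : k = l+1 := le_antisymm hkl h
        subst this; exact le_rfl
  have hDle : ∀ k, 4 * D k ≤ δ₀ k := by
    intro k
    cases k with
    | zero => simp [hD]; linarith [hδ₀pos 0]
    | succ k =>
      have : D (k+1) ≤ δ₀ (k+1) / 4 := by rw [hDsucc]; exact min_le_right _ _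
      linarith
  -- good sets
  set Good : ℕ → ℝ → Set Ω := fun n δ =>
    {ω | levyProkhorovDist (@Measure.map Ω ℝ mΩ Real.measurableSpace
            (fun ω' => Y n ω' + Z n ω') (condExpKernel (mΩ := mΩ) P 𝒢 ω)) K ≤ δ ∧
         levyProkhorovDist (@Measure.map Ω ℝ mΩ Real.measurableSpace (Z n)
            (condExpKernel (mΩ := mΩ) P 𝒢 ω)) L ≤ δ ∧
         @Measure.map Ω ℝ mΩ Real.measurableSpace (fun ω' => Y n ω' + Z n ω')
            (condExpKernel (mΩ := mΩ) P 𝒢 ω)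
          = Measure.map (· + Y n ω) (@Measure.map Ω ℝ mΩ Real.measurableSpace (Z n)
            (condExpKernel (mΩ := mΩ) P 𝒢 ω))} with hGood
  have claimA : ∀ k n m ω ω', ω ∈ Good n (D k) → ω' ∈ Good m (D k) →
      |Y n ω - Y m ω'| < 1/((k:ℝ)+1) := by
    intro k n m ω ω' hω hω'
    obtain ⟨ha1, ha2, ha3⟩ := hω
    obtain ⟨hb1, hb2, hb3⟩ := hω'
    haveI : IsProbabilityMeasure (condExpKernel (mΩ := mΩ) P 𝒢 ω) := inferInstance
    haveI : IsProbabilityMeasure (condExpKernel (mΩ := mΩ) P 𝒢 ω') := inferInstance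
    haveI : IsProbabilityMeasure (@Measure.map Ω ℝ mΩ Real.measurableSpace (Z n)
        (condExpKernel (mΩ := mΩ) P 𝒢 ω)) :=
      Measure.isProbabilityMeasure_map (hZmeas n).aemeasurable
    haveI : IsProbabilityMeasure (@Measure.map Ω ℝ mΩ Real.measurableSpace (Z m)
        (condExpKernel (mΩ := mΩ) P 𝒢 ω')) :=
      Measure.isProbabilityMeasure_map (hZmeas m).aemeasurable
    rw [ha3] at ha1
    rw [hb3] at hb1
    have hsc := shift_close K L
      (@Measure.map Ω ℝ mΩ Real.measurableSpace (Z n) (condExpKernel (mΩ := mΩ) P 𝒢 ω))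
      (@Measure.map Ω ℝ mΩ Real.measurableSpace (Z m) (condExpKernel (mΩ := mΩ) P 𝒢 ω'))
      (Y n ω) (Y m ω') (D k) ha1 ha2 hb1 hb2
    exact hδ₀ k _ (hsc.trans (by linarith [hDle k]))
  -- the a.e. set where the shift identity holds
  set Nae : Set Ω := {ω | ∀ n,
      @Measure.map Ω ℝ mΩ Real.measurableSpace (fun ω' => Y n ω' + Z n ω')
        (condExpKernel (mΩ := mΩ) P 𝒢 ω)
      = Measure.map (· + Y n ω)
        (@Measure.map Ω ℝ mΩ Real.measurableSpace (Z n) (condExpKernel (mΩ := mΩ) P 𝒢 ω))}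
    with hNae
  have hN0 : P (Naeᶜ) = 0 := by
    have := ae_iff.mp hAE
    rw [hNae, compl_setOf]
    exact this
  have hcompl : ∀ n k, (Good n (D k))ᶜ ⊆
      {ω | D k < levyProkhorovDist (@Measure.map Ω ℝ mΩ Real.measurableSpace
            (fun ω' => Y n ω' + Z n ω') (condExpKernel (mΩ := mΩ) P 𝒢 ω)) K} ∪
      ({ω | D k < levyProkhorovDist (@Measure.map Ω ℝ mΩ Real.measurableSpace (Z n)
            (condExpKernel (mΩ := mΩ) P 𝒢 ω)) L} ∪ Naeᶜ) := by
    intro n k ω hω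
    by_cases h1 : levyProkhorovDist (@Measure.map Ω ℝ mΩ Real.measurableSpace
        (fun ω' => Y n ω' + Z n ω') (condExpKernel (mΩ := mΩ) P 𝒢 ω)) K ≤ D k
    · by_cases h2 : levyProkhorovDist (@Measure.map Ω ℝ mΩ Real.measurableSpace (Z n)
          (condExpKernel (mΩ := mΩ) P 𝒢 ω)) L ≤ D k
      · by_cases h3 : ω ∈ Nae
        · exact absurd ⟨h1, h2, h3 n⟩ hω
        · exact Or.inr (Or.inr h3)
      · exact Or.inr (Or.inl (not_le.mp h2))
    · exact Or.inl (not_le.mp h1)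
  have hPbound : ∀ n k, P ((Good n (D k))ᶜ) ≤
      P {ω | D k < levyProkhorovDist (@Measure.map Ω ℝ mΩ Real.measurableSpace
            (fun ω' => Y n ω' + Z n ω') (condExpKernel (mΩ := mΩ) P 𝒢 ω)) K} +
      P {ω | D k < levyProkhorovDist (@Measure.map Ω ℝ mΩ Real.measurableSpace (Z n)
            (condExpKernel (mΩ := mΩ) P 𝒢 ω)) L} := by
    intro n k
    calc P ((Good n (D k))ᶜ) ≤ _ := measure_mono (hcompl n k)
      _ ≤ _ + P (_ ∪ Naeᶜ) := measure_union_le _ _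
      _ ≤ _ + (_ + P (Naeᶜ)) := add_le_add_right (measure_union_le _ _) _
      _ = _ := by rw [hN0, add_zero]
  -- choose witnesses
  have hNE : ∀ k, ∃ n, (Good n (D k)).Nonempty := by
    intro k
    have hsum := (hK (D k) (hDpos k)).add (hL (D k) (hDpos k))
    rw [add_zero] at hsum
    have hev := hsum.eventually_lt_const (show (0:ℝ≥0∞) < 1 by norm_num)
    obtain ⟨n, hn⟩ := hev.exists
    refine ⟨n, ?_⟩
    rw [nonempty_iff_ne_empty]
    intro hemp
    have huniv : (Good n (D k))ᶜ = univ := by rw [hemp, compl_empty]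
    have := hPbound n k
    rw [huniv, measure_univ] at this
    exact absurd (this.trans_lt hn) (by simp)
  choose nk hne using hNE
  choose ωk hωk using hne
  set c : ℕ → ℝ := fun k => Y (nk k) (ωk k) with hcdef
  have hGoodmono : ∀ n (δ δ' : ℝ), δ ≤ δ' → Good n δ ⊆ Good n δ' := by
    intro n δ δ' hle ω hω
    exact ⟨hω.1.trans hle, hω.2.1.trans hle, hω.2.2⟩
  have hcc : ∀ k l, k ≤ l → |c k - c l| < 1/((k:ℝ)+1) := by
    intro k l hkl
    exact claimA k (nk k) (nk l) (ωk k) (ωk l) (hωk k)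
      (hGoodmono (nk l) (D l) (D k) (hDanti k l hkl) (hωk l))
  have hcauchy : CauchySeq c := by
    refine cauchySeq_of_le_tendsto_0 (fun N => 2 * (1/((N:ℝ)+1))) ?_ ?_
    · intro n m N hn hm
      have h1 : |c N - c n| < 1/((N:ℝ)+1) := hcc N n hn
      have h2 : |c N - c m| < 1/((N:ℝ)+1) := hcc N m hm
      rw [Real.dist_eq]
      have : |c n - c m| ≤ |c N - c n| + |c N - c m| := by
        rw [abs_sub_comm (c N) (c n)]
        exact abs_sub_le _ _ _
      linarith
    · have := tendsto_one_div_add_atTop_nhds_zero_nat.const_mul (2:ℝ)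
      simpa using this
  obtain ⟨c₀, hc₀⟩ := cauchySeq_tendsto_of_complete hcauchy
  have hck0 : ∀ k, |c k - c₀| ≤ 1/((k:ℝ)+1) := by
    intro k
    have ht : Tendsto (fun l => |c k - c l|) atTop (𝓝 (|c k - c₀|)) :=
      (tendsto_const_nhds.sub hc₀).abs
    exact le_of_tendsto ht (eventually_atTop.mpr ⟨k, fun l hl => (hcc k l hl).le⟩)
  refine ⟨fun _ => c₀, tendstoInMeasure_iff_dist.mpr fun ε hε => ?_⟩
  obtain ⟨k, hk⟩ := exists_nat_one_div_lt (show (0:ℝ) < ε/3 by linarith)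
  have hk' : 1/((k:ℝ)+1) < ε/3 := hk
  have hsub : ∀ n, {x | ε ≤ dist (Y n x) c₀} ⊆ (Good n (D k))ᶜ := by
    intro n ω hω hGoodω
    have h1 : |Y n ω - c k| < 1/((k:ℝ)+1) :=
      claimA k n (nk k) ω (ωk k) hGoodω (hωk k)
    have h2 := hck0 k
    simp only [mem_setOf_eq, Real.dist_eq] at hω
    have h3 : |Y n ω - c₀| ≤ |Y n ω - c k| + |c k - c₀| := abs_sub_le _ _ _
    linarith
  have hup : ∀ n, P {x | ε ≤ dist (Y n x) c₀} ≤
      P {ω | D k < levyProkhorovDist (@Measure.map Ω ℝ mΩ Real.measurableSpace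
            (fun ω' => Y n ω' + Z n ω') (condExpKernel (mΩ := mΩ) P 𝒢 ω)) K} +
      P {ω | D k < levyProkhorovDist (@Measure.map Ω ℝ mΩ Real.measurableSpace (Z n)
            (condExpKernel (mΩ := mΩ) P 𝒢 ω)) L} :=
    fun n => (measure_mono (hsub n)).trans (hPbound n k)
  have hdown : Tendsto (fun n =>
      P {ω | D k < levyProkhorovDist (@Measure.map Ω ℝ mΩ Real.measurableSpace
            (fun ω' => Y n ω' + Z n ω') (condExpKernel (mΩ := mΩ) P 𝒢 ω)) K} +
      P {ω | D k < levyProkhorovDist (@Measure.map Ω ℝ mΩ Real.measurableSpace (Z n)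
            (condExpKernel (mΩ := mΩ) P 𝒢 ω)) L}) atTop (𝓝 0) := by
    have := (hK (D k) (hDpos k)).add (hL (D k) (hDpos k))
    rwa [add_zero] at this
  exact tendsto_of_tendsto_of_tendsto_of_le_of_le tendsto_const_nhds hdown
    (fun n => zero_le) hup
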